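/- The polynomial ψ₁(x) = x⁴ + 2x² + 2x − 1 is strictly increasing on (0,1) and has a unique root ã in (0,1), which satisfies ã < 2√3 − 3. Moreover, for x ∈ (0,1), setting r_x = (√((1+x)² + x²) − (1+x))/x², one has r_x ≤ x if and only if ψ₁(x) ≥ 0, i.e. if and only if x ≥ ã. -/
import Mathlib


open Metric

/-- The majorant series `M_F(r) = ∑ |A_n| r^n` of an analytic function
`F(z) = ∑ A_n z^n` on the unit disk, where `A_n = F⁽ⁿ⁾(0)/n!`. -/
noncomputable def majorant (F : ℂ → ℂ) (r : ℝ) : ℝ :=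
  ∑' n : ℕ, ‖iteratedDeriv n F 0 / n.factorial‖ * r ^ n

/-- `g` is subordinate to `f` on the unit disk: `g = f ∘ φ` for some analytic
self-map `φ` of the unit disk with `φ 0 = 0`. -/
def Subordinate (g f : ℂ → ℂ) : Prop :=
  ∃ φ : ℂ → ℂ, AnalyticOnNhd ℂ φ (ball 0 1) ∧ φ 0 = 0 ∧
    Set.MapsTo φ (ball 0 1) (ball 0 1) ∧ Set.EqOn g (f ∘ φ) (ball 0 1)

/-- The polynomial `ψ₁(x) = x⁴ + 2x² + 2x - 1` is strictly increasing on
`(0,1)`, has a unique root `ã` in `(0,1)` with `ã < 2√3 - 3`, and for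
`x ∈ (0,1)`, `r_x ≤ x ↔ ψ₁(x) ≥ 0 ↔ x ≥ ã`, where
`r_x = (√((1+x)² + x²) - (1+x))/x²`. -/
theorem psi_one_root_properties :
    StrictMonoOn (fun x : ℝ => x ^ 4 + 2 * x ^ 2 + 2 * x - 1) (Set.Ioo 0 1) ∧
    ∃ a ∈ Set.Ioo (0 : ℝ) 1,
      a ^ 4 + 2 * a ^ 2 + 2 * a - 1 = 0 ∧
      (∀ x ∈ Set.Ioo (0 : ℝ) 1, x ^ 4 + 2 * x ^ 2 + 2 * x - 1 = 0 → x = a) ∧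
      a < 2 * Real.sqrt 3 - 3 ∧
      ∀ x ∈ Set.Ioo (0 : ℝ) 1,
        ((Real.sqrt ((1 + x) ^ 2 + x ^ 2) - (1 + x)) / x ^ 2 ≤ x ↔
            0 ≤ x ^ 4 + 2 * x ^ 2 + 2 * x - 1) ∧
        (0 ≤ x ^ 4 + 2 * x ^ 2 + 2 * x - 1 ↔ a ≤ x) := by
  have hmono : StrictMonoOn (fun x : ℝ => x ^ 4 + 2 * x ^ 2 + 2 * x - 1) (Set.Ioo 0 1) := by
    intro x hx y hy hxy
    simp only
    have key : 0 < (y - x) * ((y + x) * (y ^ 2 + x ^ 2) + 2 * (y + x) + 2) := by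
      apply mul_pos (sub_pos.mpr hxy)
      nlinarith [hx.1, hy.1, sq_nonneg x, sq_nonneg y]
    nlinarith [key]
  refine ⟨hmono, ?_⟩
  have hcont : ContinuousOn (fun x : ℝ => x ^ 4 + 2 * x ^ 2 + 2 * x - 1) (Set.Icc 0 1) :=
    (by continuity : Continuous fun x : ℝ => x ^ 4 + 2 * x ^ 2 + 2 * x - 1).continuousOn
  obtain ⟨a, haI, hroot⟩ : ∃ a ∈ Set.Icc (0:ℝ) 1,
      (fun x : ℝ => x ^ 4 + 2 * x ^ 2 + 2 * x - 1) a = 0 := by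
    have := intermediate_value_Icc (by norm_num : (0:ℝ) ≤ 1) hcont
    have h0 : (0:ℝ) ∈ Set.Icc ((fun x : ℝ => x ^ 4 + 2 * x ^ 2 + 2 * x - 1) 0)
        ((fun x : ℝ => x ^ 4 + 2 * x ^ 2 + 2 * x - 1) 1) := by norm_num
    obtain ⟨a, ha, hfa⟩ := this h0
    exact ⟨a, ha, hfa⟩
  simp only at hroot
  have ha0 : 0 < a := by
    rcases haI.1.lt_or_eq with h | h
    · exact h
    · exfalso; rw [← h] at hroot; norm_num at hroot
  have ha1 : a < 1 := by
    rcases haI.2.lt_or_eq with h | h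
    · exact h
    · exfalso; rw [h] at hroot; norm_num at hroot
  have haIoo : a ∈ Set.Ioo (0:ℝ) 1 := ⟨ha0, ha1⟩
  have s3 : Real.sqrt 3 ^ 2 = 3 := Real.sq_sqrt (by norm_num)
  have s3pos : 0 < Real.sqrt 3 := Real.sqrt_pos.mpr (by norm_num)
  have hbIoo : 2 * Real.sqrt 3 - 3 ∈ Set.Ioo (0:ℝ) 1 := by
    constructor <;> nlinarith
  refine ⟨a, haIoo, hroot, ?_, ?_, ?_⟩
  · intro x hx hfx
    rcases lt_trichotomy x a with h | h | h
    · exfalso; have := hmono hx haIoo h; simp only at this; linarith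
    · exact h
    · exfalso; have := hmono haIoo hx h; simp only at this; linarith
  · by_contra h
    push_neg at h
    rcases h.lt_or_eq with h | h
    · have := hmono hbIoo haIoo h
      simp only at this
      nlinarith
    · rw [← h] at hroot; nlinarith
  · intro x hx
    have hx0 := hx.1
    have hx1 := hx.2
    have hpsi : (Real.sqrt ((1 + x) ^ 2 + x ^ 2) - (1 + x)) / x ^ 2 ≤ x ↔
        0 ≤ x ^ 4 + 2 * x ^ 2 + 2 * x - 1 := by
      rw [div_le_iff₀ (by positivity), sub_le_iff_le_add]
      rw [show x * x ^ 2 + (1 + x) = x ^ 3 + (1 + x) by ring]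
      rw [Real.sqrt_le_iff]
      constructor
      · rintro ⟨h1, h2⟩; nlinarith [mul_pos hx0 hx0, h2]
      · intro h
        refine ⟨by nlinarith, by nlinarith [mul_nonneg (sq_nonneg x) h]⟩
    refine ⟨hpsi, ?_, ?_⟩
    · intro h
      by_contra hax
      push_neg at hax
      have := hmono hx haIoo hax
      simp only at this
      linarith
    · intro h
      rcases h.lt_or_eq with h | h
      · have := hmono haIoo hx h
        simp only at this
        linarith
      · rw [← h]; linarith [hroot]
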